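/- Define, for u ∈ ℝ with u⁴ < 1/2 and v ∈ ℝ: E(u) = u − (1 − u⁴)^{1/4}, F(u) = u + (1 − u⁴)^{1/4}, E′(u) = 1 + u³(1 − u⁴)^{−3/4}, F′(u) = 1 − u³(1 − u⁴)^{−3/4}, δ(u) = √(E′(u)² + F′(u)²), f(u, v) = (E(u)cos v, E(u)sin v, F(u)) ∈ ℝ³, and ξ(u, v) = (1/δ(u)) · (F′(u)cos v, F′(u)sin v, −E′(u)) ∈ ℝ³. Then for every such (u, v): (i) the vectors ∂f/∂u, ∂f/∂v, and ξ are linearly independent in ℝ³ (indeed det(∂f/∂u, ∂f/∂v, ξ) = −E(u)·δ(u) ≠ 0); and (ii) both partial derivatives ∂ξ/∂u and ∂ξ/∂v lie in the ℝ-linear span of ∂f/∂u and ∂f/∂v. -/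

import Mathlib

noncomputable def Efun (u : ℝ) : ℝ := u - (1 - u ^ 4) ^ ((1 : ℝ) / 4)

noncomputable def Ffun (u : ℝ) : ℝ := u + (1 - u ^ 4) ^ ((1 : ℝ) / 4)

noncomputable def Efun' (u : ℝ) : ℝ := 1 + u ^ 3 * (1 - u ^ 4) ^ (-(3 : ℝ) / 4)

noncomputable def Ffun' (u : ℝ) : ℝ := 1 - u ^ 3 * (1 - u ^ 4) ^ (-(3 : ℝ) / 4)

noncomputable def deltaFun (u : ℝ) : ℝ := Real.sqrt (Efun' u ^ 2 + Ffun' u ^ 2)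

noncomputable def fMap (u v : ℝ) : ℝ × ℝ × ℝ :=
  (Efun u * Real.cos v, Efun u * Real.sin v, Ffun u)

noncomputable def xiMap (u v : ℝ) : ℝ × ℝ × ℝ :=
  (deltaFun u)⁻¹ • (Ffun' u * Real.cos v, Ffun' u * Real.sin v, -Efun' u)

namespace Stmt12Aux

lemma hbase (u : ℝ) : HasDerivAt (fun s : ℝ => 1 - s ^ 4) (-(4 * u ^ 3)) u := by
  simpa using (hasDerivAt_pow 4 u).const_sub 1

lemma hrpow (u : ℝ) (hp : (0:ℝ) < 1 - u ^ 4) (q : ℝ) :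
    HasDerivAt (fun s : ℝ => (1 - s ^ 4) ^ q)
      (q * (1 - u ^ 4) ^ (q - 1) * (-(4 * u ^ 3))) u :=
  by have h := (Real.hasDerivAt_rpow_const (p := q) (Or.inl hp.ne')).comp u (hbase u); exact h

lemma hE (u : ℝ) (hp : (0:ℝ) < 1 - u ^ 4) : HasDerivAt Efun (Efun' u) u := by
  have h := (hasDerivAt_id u).sub (hrpow u hp ((1:ℝ)/4))
  have e : (1:ℝ) - (1:ℝ)/4 * (1 - u ^ 4) ^ ((1:ℝ)/4 - 1) * (-(4 * u ^ 3)) = Efun' u := by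
    rw [show ((1:ℝ)/4 - 1) = -(3:ℝ)/4 by norm_num]; unfold Efun'; ring
  rw [← e]; exact h

lemma hF (u : ℝ) (hp : (0:ℝ) < 1 - u ^ 4) : HasDerivAt Ffun (Ffun' u) u := by
  have h := (hasDerivAt_id u).add (hrpow u hp ((1:ℝ)/4))
  have e : (1:ℝ) + (1:ℝ)/4 * (1 - u ^ 4) ^ ((1:ℝ)/4 - 1) * (-(4 * u ^ 3)) = Ffun' u := by
    rw [show ((1:ℝ)/4 - 1) = -(3:ℝ)/4 by norm_num]; unfold Ffun'; ring
  rw [← e]; exact h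

noncomputable def Wfun (u : ℝ) : ℝ :=
  3 * u ^ 2 * (1 - u ^ 4) ^ (-(3:ℝ)/4) + 3 * u ^ 6 * (1 - u ^ 4) ^ (-(7:ℝ)/4)

lemma hE2 (u : ℝ) (hp : (0:ℝ) < 1 - u ^ 4) : HasDerivAt Efun' (Wfun u) u := by
  have h := ((hasDerivAt_pow 3 u).mul (hrpow u hp (-(3:ℝ)/4))).const_add 1
  have e : (3:ℕ) * u ^ (3-1) * (1 - u ^ 4) ^ (-(3:ℝ)/4)
      + u ^ 3 * (-(3:ℝ)/4 * (1 - u ^ 4) ^ (-(3:ℝ)/4 - 1) * (-(4 * u ^ 3))) = Wfun u := by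
    rw [show (-(3:ℝ)/4 - 1) = -(7:ℝ)/4 by norm_num]; unfold Wfun; push_cast; ring
  rw [← e]; exact h

lemma hF2 (u : ℝ) (hp : (0:ℝ) < 1 - u ^ 4) : HasDerivAt Ffun' (-Wfun u) u := by
  have h := ((hasDerivAt_pow 3 u).mul (hrpow u hp (-(3:ℝ)/4))).const_sub 1
  have e : -Wfun u = -((3:ℕ) * u ^ (3-1) * (1 - u ^ 4) ^ (-(3:ℝ)/4)
      + u ^ 3 * (-(3:ℝ)/4 * (1 - u ^ 4) ^ (-(3:ℝ)/4 - 1) * (-(4 * u ^ 3)))) := by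
    rw [show (-(3:ℝ)/4 - 1) = -(7:ℝ)/4 by norm_num]; unfold Wfun; push_cast; ring
  rw [e]; exact h

lemma hsum (u : ℝ) : Efun' u + Ffun' u = 2 := by unfold Efun' Ffun'; ring

lemma hAB (u : ℝ) : 0 < Efun' u ^ 2 + Ffun' u ^ 2 := by
  nlinarith [hsum u, sq_nonneg (Efun' u - Ffun' u)]

lemma hDpos (u : ℝ) : 0 < deltaFun u := Real.sqrt_pos.mpr (hAB u)

lemma hD2 (u : ℝ) : deltaFun u ^ 2 = Efun' u ^ 2 + Ffun' u ^ 2 := Real.sq_sqrt (hAB u).le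

lemma hD (u : ℝ) (hp : (0:ℝ) < 1 - u ^ 4) :
    HasDerivAt deltaFun (Wfun u * (Efun' u - Ffun' u) / deltaFun u) u := by
  have h := (((hE2 u hp).pow 2).add ((hF2 u hp).pow 2)).sqrt (ne_of_gt (hAB u))
  have e : ((2:ℕ) * Efun' u ^ (2-1) * Wfun u + (2:ℕ) * Ffun' u ^ (2-1) * (-Wfun u))
      / (2 * Real.sqrt (Efun' u ^ 2 + Ffun' u ^ 2))
      = Wfun u * (Efun' u - Ffun' u) / deltaFun u := by
    unfold deltaFun; push_cast; ring
  rw [← e]; exact h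

lemma hpos (u : ℝ) (hu : u ^ 4 < 1/2) : (0:ℝ) < 1 - u ^ 4 := by
  have h0 : (0:ℝ) ≤ u ^ 4 := by positivity
  linarith

lemma hEneg (u : ℝ) (hu : u ^ 4 < 1/2) : Efun u < 0 := by
  have hp := hpos u hu
  unfold Efun
  rcases le_or_gt u 0 with h | h
  · have : (0:ℝ) < (1 - u ^ 4) ^ ((1:ℝ)/4) := Real.rpow_pos_of_pos hp _
    linarith
  · have h4 : u ^ 4 < 1 - u ^ 4 := by linarith
    have hu4 : (0:ℝ) ≤ u ^ 4 := by positivity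
    have hlt : (u ^ 4 : ℝ) ^ ((1:ℝ)/4) < (1 - u ^ 4) ^ ((1:ℝ)/4) :=
      Real.rpow_lt_rpow hu4 h4 (by norm_num)
    have he : (u ^ 4 : ℝ) ^ ((1:ℝ)/4) = u := by
      rw [← Real.rpow_natCast u 4, ← Real.rpow_mul h.le]
      norm_num
    rw [he] at hlt
    linarith

lemma hfu (u v : ℝ) (hp : (0:ℝ) < 1 - u ^ 4) :
    HasDerivAt (fun s => fMap s v)
      ((Efun' u * Real.cos v, Efun' u * Real.sin v, Ffun' u) : ℝ × ℝ × ℝ) u := by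
  unfold fMap
  exact ((hE u hp).mul_const _).prodMk (((hE u hp).mul_const _).prodMk (hF u hp))

lemma hfv (u v : ℝ) :
    HasDerivAt (fun t => fMap u t)
      ((Efun u * -Real.sin v, Efun u * Real.cos v, 0) : ℝ × ℝ × ℝ) v := by
  unfold fMap
  exact ((Real.hasDerivAt_cos v).const_mul _).prodMk
    (((Real.hasDerivAt_sin v).const_mul _).prodMk (hasDerivAt_const _ _))

lemma xi_eq (s t : ℝ) : xiMap s t =
    ((deltaFun s)⁻¹ * (Ffun' s * Real.cos t), (deltaFun s)⁻¹ * (Ffun' s * Real.sin t),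
      (deltaFun s)⁻¹ * -Efun' s) := by
  simp [xiMap, Prod.smul_mk, smul_eq_mul]

noncomputable def Dinv' (u : ℝ) : ℝ :=
  -(Wfun u * (Efun' u - Ffun' u) / deltaFun u) / deltaFun u ^ 2

lemma hDinv (u : ℝ) (hp : (0:ℝ) < 1 - u ^ 4) :
    HasDerivAt (fun s => (deltaFun s)⁻¹) (Dinv' u) u :=
  (hD u hp).inv (hDpos u).ne'

lemma hxu (u v : ℝ) (hp : (0:ℝ) < 1 - u ^ 4) :
    HasDerivAt (fun s => xiMap s v)
      ((Dinv' u * (Ffun' u * Real.cos v) + (deltaFun u)⁻¹ * (-Wfun u * Real.cos v),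
        Dinv' u * (Ffun' u * Real.sin v) + (deltaFun u)⁻¹ * (-Wfun u * Real.sin v),
        Dinv' u * -Efun' u + (deltaFun u)⁻¹ * -Wfun u) : ℝ × ℝ × ℝ) u := by
  have h : (fun s => xiMap s v) = fun s =>
      (((deltaFun s)⁻¹ * (Ffun' s * Real.cos v), (deltaFun s)⁻¹ * (Ffun' s * Real.sin v),
        (deltaFun s)⁻¹ * -Efun' s) : ℝ × ℝ × ℝ) := funext fun s => xi_eq s v
  rw [h]
  exact ((hDinv u hp).mul ((hF2 u hp).mul_const _)).prodMk
    ((((hDinv u hp).mul ((hF2 u hp).mul_const _))).prodMk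
      ((hDinv u hp).mul (hE2 u hp).neg))

lemma hxv (u v : ℝ) :
    HasDerivAt (fun t => xiMap u t)
      (((deltaFun u)⁻¹ * (Ffun' u * -Real.sin v), (deltaFun u)⁻¹ * (Ffun' u * Real.cos v),
        0) : ℝ × ℝ × ℝ) v := by
  have h : (fun t => xiMap u t) = fun t =>
      (((deltaFun u)⁻¹ * (Ffun' u * Real.cos t), (deltaFun u)⁻¹ * (Ffun' u * Real.sin t),
        (deltaFun u)⁻¹ * -Efun' u) : ℝ × ℝ × ℝ) := funext fun t => xi_eq u t
  rw [h]
  exact (((Real.hasDerivAt_cos v).const_mul _).const_mul _).prodMk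
    ((((Real.hasDerivAt_sin v).const_mul _).const_mul _).prodMk (hasDerivAt_const _ _))

lemma alg1 (A B W D : ℝ) (hD0 : D ≠ 0) (h2 : D^2 = A^2+B^2) :
    ((((-(W*(A-B)/D)/D^2) * B + D⁻¹ * (-W))*A + ((-(W*(A-B)/D)/D^2) * (-A) + D⁻¹ * (-W))*B)/D^2) * A
      = (-(W*(A-B)/D)/D^2) * B + D⁻¹ * (-W) := by
  field_simp
  linear_combination W * D^2 * h2

lemma alg2 (A B W D : ℝ) (hD0 : D ≠ 0) (h2 : D^2 = A^2+B^2) :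
    ((((-(W*(A-B)/D)/D^2) * B + D⁻¹ * (-W))*A + ((-(W*(A-B)/D)/D^2) * (-A) + D⁻¹ * (-W))*B)/D^2) * B
      = (-(W*(A-B)/D)/D^2) * (-A) + D⁻¹ * (-W) := by
  field_simp
  linear_combination W * D^2 * h2

end Stmt12Aux

open Stmt12Aux

/-- The field `ξ` is an equiaffine transversal vector field for the parametrized
surface `f`: (i) `∂f/∂u`, `∂f/∂v`, `ξ` are linearly independent, and
(ii) `∂ξ/∂u` and `∂ξ/∂v` are tangent, i.e. lie in `span {∂f/∂u, ∂f/∂v}`. -/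
theorem stmt12 (u v : ℝ) (hu : u ^ 4 < 1 / 2) :
    LinearIndependent ℝ
      ![deriv (fun s => fMap s v) u, deriv (fun t => fMap u t) v, xiMap u v] ∧
    deriv (fun s => xiMap s v) u ∈
      Submodule.span ℝ {deriv (fun s => fMap s v) u, deriv (fun t => fMap u t) v} ∧
    deriv (fun t => xiMap u t) v ∈
      Submodule.span ℝ {deriv (fun s => fMap s v) u, deriv (fun t => fMap u t) v} := by
  have hp := hpos u hu
  have hE0 : Efun u ≠ 0 := ne_of_lt (hEneg u hu)
  have hD0 : deltaFun u ≠ 0 := (hDpos u).ne'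
  have h2 := hD2 u
  have hfu' := (hfu u v hp).deriv
  have hfv' := (hfv u v).deriv
  have hxu' := (hxu u v hp).deriv
  have hxv' := (hxv u v).deriv
  rw [hfu', hfv', hxu', hxv']
  refine ⟨?_, ?_, ?_⟩
  · -- linear independence
    rw [Fintype.linearIndependent_iff]
    intro g hg
    simp only [Fin.sum_univ_three, Matrix.cons_val_zero, Matrix.cons_val_one,
      Matrix.head_cons, Matrix.cons_val_two, Matrix.tail_cons] at hg
    rw [xi_eq] at hg
    simp only [Prod.smul_mk, Prod.mk_add_mk, smul_eq_mul, Prod.mk_eq_zero] at hg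
    obtain ⟨e1, e2, e3⟩ := hg
    have hc : Real.sin v ^ 2 + Real.cos v ^ 2 = 1 := Real.sin_sq_add_cos_sq v
    have hbE : g 1 * Efun u = 0 := by
      linear_combination Real.cos v * e2 - Real.sin v * e1 - (g 1 * Efun u) * hc
    have hb : g 1 = 0 := by
      rcases mul_eq_zero.mp hbE with h | h
      · exact h
      · exact absurd h hE0
    have hq1 : g 0 * Efun' u + g 2 * ((deltaFun u)⁻¹ * Ffun' u) = 0 := by
      linear_combination Real.cos v * e1 + Real.sin v * e2
        - (g 0 * Efun' u + g 2 * ((deltaFun u)⁻¹ * Ffun' u)) * hc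
    have hq2 : g 0 * Ffun' u + g 2 * ((deltaFun u)⁻¹ * -Efun' u) = 0 := by
      linear_combination e3
    have ha0 : g 0 * (Efun' u ^ 2 + Ffun' u ^ 2) = 0 := by
      linear_combination Efun' u * hq1 + Ffun' u * hq2
    have ha : g 0 = 0 := by
      rcases mul_eq_zero.mp ha0 with h | h
      · exact h
      · exact absurd h (hAB u).ne'
    have hc0 : g 2 * ((deltaFun u)⁻¹ * (Efun' u ^ 2 + Ffun' u ^ 2)) = 0 := by
      linear_combination Ffun' u * hq1 - Efun' u * hq2
    have hcz : g 2 = 0 := by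
      rcases mul_eq_zero.mp hc0 with h | h
      · exact h
      · exact absurd h (mul_ne_zero (inv_ne_zero hD0) (hAB u).ne')
    intro i
    fin_cases i <;> assumption
  · -- ∂ξ/∂u tangent
    set A := Efun' u
    set B := Ffun' u
    set W := Wfun u
    set D := deltaFun u
    set a : ℝ := ((((-(W*(A-B)/D)/D^2) * B + D⁻¹ * (-W))*A
      + ((-(W*(A-B)/D)/D^2) * (-A) + D⁻¹ * (-W))*B)/D^2) with ha_def
    have k1 : a * A = Dinv' u * B + D⁻¹ * (-W) := alg1 A B W D hD0 h2
    have k2 : a * B = Dinv' u * (-A) + D⁻¹ * (-W) := alg2 A B W D hD0 h2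
    have key : ((Dinv' u * (B * Real.cos v) + D⁻¹ * (-W * Real.cos v),
        Dinv' u * (B * Real.sin v) + D⁻¹ * (-W * Real.sin v),
        Dinv' u * -A + D⁻¹ * -W) : ℝ × ℝ × ℝ)
        = a • ((A * Real.cos v, A * Real.sin v, B) : ℝ × ℝ × ℝ) := by
      simp only [Prod.smul_mk, smul_eq_mul, Prod.mk.injEq]
      refine ⟨?_, ?_, ?_⟩
      · linear_combination Real.cos v * k1.symm
      · linear_combination Real.sin v * k1.symm
      · linear_combination k2.symm
    rw [key]
    exact Submodule.smul_mem _ a (Submodule.subset_span (Set.mem_insert _ _))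
  · -- ∂ξ/∂v tangent
    set A := Efun' u
    set B := Ffun' u
    set D := deltaFun u
    set b : ℝ := B / (Efun u * D)
    have key : ((D⁻¹ * (B * -Real.sin v), D⁻¹ * (B * Real.cos v), 0) : ℝ × ℝ × ℝ)
        = b • ((Efun u * -Real.sin v, Efun u * Real.cos v, 0) : ℝ × ℝ × ℝ) := by
      simp only [Prod.smul_mk, smul_eq_mul, Prod.mk.injEq]
      refine ⟨?_, ?_, by simp⟩
      · simp only [b]; field_simp
      · simp only [b]; field_simp
    rw [key]
    exact Submodule.smul_mem _ b (Submodule.subset_span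
      (Set.mem_insert_of_mem _ (Set.mem_singleton _)))
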